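/- Let q be a prime power, F a finite field with q^2 elements, K a subfield of F with q elements, and α an element of F not in K. Let χ be a multiplicative character of F (with χ(0)=0) whose restriction to the unit group K* of K is nontrivial (i.e., χ(t) ≠ 1 for some nonzero t ∈ K). Then the absolute value of the sum over all t ∈ K of χ(t − α) equals √q. -/

import Mathlib

/-- **Katz sum for quadratic extensions, nontrivial case.**
Let `q` be a prime power, `F` a finite field with `q^2` elements, `K` a subfield of `F`
with `q` elements, and `α ∈ F \ K`.  If `χ` is a multiplicative character of `F` whose
restriction to `K*` is nontrivial, then `|∑_{t ∈ K} χ(t - α)| = √q`. -/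
theorem katz_sum_quadratic_nontrivial
    (q : ℕ) (hq : IsPrimePow q)
    (F : Type*) [Field F] [Fintype F]
    (hF : Fintype.card F = q ^ 2)
    (K : Subfield F) [Fintype ↥K] (hK : Fintype.card ↥K = q)
    (α : F) (hα : α ∉ K)
    (χ : MulChar F ℂ)
    (hχ : ∃ t : F, t ∈ K ∧ t ≠ 0 ∧ χ t ≠ 1) :
    ‖∑ t : ↥K, χ ((t : F) - α)‖ = Real.sqrt q := by
  classical
  obtain ⟨t₀, ht₀K, ht₀0, ht₀⟩ := hχ
  set A : ℂ := ∑ t : ↥K, χ ((t : F) - α) with hA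
  -- `t - α ≠ 0` for `t ∈ K`
  have hne : ∀ t : ↥K, (t : F) - α ≠ 0 := by
    intro t h
    exact hα (sub_eq_zero.mp h ▸ t.2)
  -- linear independence of `1, α` over `K`
  have hindep : ∀ a b : ↥K, (a : F) + (b : F) * α = 0 → a = 0 ∧ b = 0 := by
    intro a b h
    by_cases hb : b = 0
    · subst hb
      simp only [ZeroMemClass.coe_zero, zero_mul, add_zero] at h
      exact ⟨by exact_mod_cast h, rfl⟩
    · exfalso
      have hbF : (b : F) ≠ 0 := fun hbF => hb (by exact_mod_cast hbF)
      have : α = ((-a / b : ↥K) : F) := by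
        push_cast
        rw [eq_div_iff hbF]
        linear_combination h
      exact hα (this ▸ SetLike.coe_mem (-a / b))
  -- `χ` is nontrivial
  have hχ1 : χ ≠ 1 := by
    intro h
    rw [h, MulChar.one_apply (isUnit_iff_ne_zero.mpr ht₀0)] at ht₀
    exact ht₀ rfl
  -- sum of `χ` over all of `F` vanishes
  have hsumF : ∑ y : F, χ y = 0 := MulChar.sum_eq_zero_of_ne_one hχ1
  -- sum of `χ` over `K` vanishes
  have hsumK : ∑ t : ↥K, χ (t : F) = 0 := by
    set t₀K : ↥K := ⟨t₀, ht₀K⟩ with ht₀K'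
    have h0 : t₀K ≠ 0 := fun h => ht₀0 (congrArg Subtype.val h)
    have hcomp : ∑ t : ↥K, χ ((t₀K * t : ↥K) : F) = ∑ t : ↥K, χ (t : F) :=
      Equiv.sum_comp (Equiv.mulLeft₀ t₀K h0) (fun t => χ (t : F))
    have : χ t₀ * ∑ t : ↥K, χ (t : F) = ∑ t : ↥K, χ (t : F) := by
      rw [Finset.mul_sum, ← hcomp]
      refine Finset.sum_congr rfl fun t _ => ?_
      push_cast
      rw [map_mul]
    have h2 : (χ t₀ - 1) * ∑ t : ↥K, χ (t : F) = 0 := by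
      rw [sub_mul, one_mul, this, sub_self]
    rcases mul_eq_zero.mp h2 with h | h
    · exact absurd (sub_eq_zero.mp h) ht₀
    · exact h
  -- the sum over `F \ K`
  set T : Finset F := Finset.univ.filter (fun y => y ∉ K) with hT
  have hsumT : ∑ y ∈ T, χ y = 0 := by
    have hsplit : (∑ y ∈ Finset.univ.filter (fun y : F => y ∈ K), χ y) + ∑ y ∈ T, χ y
        = ∑ y : F, χ y := Finset.sum_filter_add_sum_filter_not _ _ _
    have hKsum : ∑ y ∈ Finset.univ.filter (fun y : F => y ∈ K), χ y = ∑ t : ↥K, χ (t : F) :=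
      Finset.sum_subtype _ (by simp) _
    rw [hKsum, hsumK, zero_add] at hsplit
    rw [hsplit, hsumF]
  -- card of `T`
  have hcardK : (Finset.univ.filter (fun y : F => y ∈ K)).card = q := by
    have h1 := Fintype.card_subtype (fun y : F => y ∈ K)
    rw [← h1, ← hK]
  have hcardT : T.card = q ^ 2 - q := by
    have := Finset.card_filter_add_card_filter_not
      (s := (Finset.univ : Finset F)) (p := fun y : F => y ∈ K)
    rw [Finset.card_univ, hF, hcardK] at this
    have hq2 : q ≤ q ^ 2 := Nat.le_self_pow two_ne_zero q
    rw [hT]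
    omega
  -- key map
  set e : ↥K × ↥K → F := fun p => ((p.1 : F) - α) * ((p.2 : F) - α)⁻¹ with he
  -- e maps off-diagonal pairs into T
  have hmaps : ∀ p ∈ (Finset.univ : Finset ↥K).offDiag, e p ∈ T := by
    rintro ⟨t, u⟩ hp
    rw [Finset.mem_offDiag] at hp
    obtain ⟨-, -, htu⟩ := hp
    simp only [hT, Finset.mem_filter, Finset.mem_univ, true_and]
    intro hyK
    set c : ↥K := ⟨e (t, u), hyK⟩ with hc
    have hce : (c : F) = ((t : F) - α) * ((u : F) - α)⁻¹ := rfl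
    have hmul : (c : F) * ((u : F) - α) = (t : F) - α := by
      rw [hce, mul_assoc, inv_mul_cancel₀ (hne u), mul_one]
    have h0 : ((t - c * u : ↥K) : F) + ((c - 1 : ↥K) : F) * α = 0 := by
      push_cast
      linear_combination -hmul
    obtain ⟨h1, h2⟩ := hindep _ _ h0
    have hc1 : c = 1 := by
      have := sub_eq_zero.mp h2
      exact this
    rw [hc1, one_mul] at h1
    exact htu (sub_eq_zero.mp h1)
  -- e is injective on off-diagonal pairs
  have hinj : ∀ (p p' : ↥K × ↥K), p ∈ (Finset.univ : Finset ↥K).offDiag →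
      p' ∈ (Finset.univ : Finset ↥K).offDiag → e p = e p' → p = p' := by
    rintro ⟨t, u⟩ ⟨t', u'⟩ hp hp' heq
    rw [Finset.mem_offDiag] at hp hp'
    obtain ⟨-, -, htu⟩ := hp
    obtain ⟨-, -, htu'⟩ := hp'
    have hcross : ((t : F) - α) * ((u' : F) - α) = ((t' : F) - α) * ((u : F) - α) := by
      have h1 := hne u
      have h2 := hne u'
      have heq' : ((t : F) - α) / ((u : F) - α) = ((t' : F) - α) / ((u' : F) - α) := by
        rw [div_eq_mul_inv, div_eq_mul_inv]; exact heq
      rw [div_eq_div_iff h1 h2] at heq'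
      linear_combination heq'
    have h0 : ((t * u' - t' * u : ↥K) : F) + (((t' + u) - (t + u') : ↥K) : F) * α = 0 := by
      push_cast
      linear_combination hcross
    obtain ⟨h1, h2⟩ := hindep _ _ h0
    have h1' : t * u' = t' * u := sub_eq_zero.mp h1
    have h2' : t' + u = t + u' := sub_eq_zero.mp h2
    have key : (t - t') * (u - t) = 0 := by
      linear_combination t * h2' + h1'
    rcases mul_eq_zero.mp key with h | h
    · have ht : t = t' := sub_eq_zero.mp h
      have hu : u = u' := by
        have := h2'
        rw [← ht] at this
        exact add_left_cancel this
      rw [ht, hu]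
    · exact absurd (sub_eq_zero.mp h).symm htu
  -- e is surjective onto T (by cardinality)
  have hcard_offDiag : ((Finset.univ : Finset ↥K).offDiag).card = q * q - q := by
    rw [Finset.offDiag_card, Finset.card_univ, hK]
  have hsurj : ∀ y ∈ T, ∃ p, ∃ hp : p ∈ (Finset.univ : Finset ↥K).offDiag, y = e p := by
    have hle : T.card ≤ ((Finset.univ : Finset ↥K).offDiag).card := by
      rw [hcardT, hcard_offDiag, sq]
    exact Finset.surj_on_of_inj_on_of_card_le (fun p _ => e p) hmaps
      (fun p₁ p₂ h₁ h₂ h => hinj p₁ p₂ h₁ h₂ h) hle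
  -- the off-diagonal sum equals the sum over T
  have hoff : ∑ p ∈ (Finset.univ : Finset ↥K).offDiag, χ (e p) = ∑ y ∈ T, χ y := by
    refine Finset.sum_bij (fun p _ => e p) hmaps (fun p₁ h₁ p₂ h₂ h => hinj p₁ p₂ h₁ h₂ h)
      ?_ (fun p _ => rfl)
    intro y hy
    obtain ⟨p, hp, hpe⟩ := hsurj y hy
    exact ⟨p, hp, hpe.symm⟩
  -- the diagonal sum
  have hdiag : ∑ p ∈ (Finset.univ : Finset ↥K).diag, χ (e p) = (q : ℂ) := by
    have : ∀ p ∈ (Finset.univ : Finset ↥K).diag, χ (e p) = 1 := by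
      rintro ⟨t, u⟩ hp
      rw [Finset.mem_diag] at hp
      obtain ⟨-, htu⟩ := hp
      have htu' : t = u := htu
      subst htu'
      have : e (t, t) = 1 := mul_inv_cancel₀ (hne t)
      rw [this, χ.map_one]
    rw [Finset.sum_congr rfl this, Finset.sum_const, Finset.diag_card, Finset.card_univ, hK,
      nsmul_eq_mul, mul_one]
  -- main computation: A * conj A = q
  have hmain : A * (starRingEnd ℂ) A = (q : ℂ) := by
    have hconj : (starRingEnd ℂ) A = ∑ u : ↥K, (starRingEnd ℂ) (χ ((u : F) - α)) :=
      map_sum _ _ _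
    rw [hA, hconj, Finset.sum_mul_sum]
    have hterm : ∀ t u : ↥K,
        χ ((t : F) - α) * (starRingEnd ℂ) (χ ((u : F) - α)) = χ (e (t, u)) := by
      intro t u
      have h1 : (starRingEnd ℂ) (χ ((u : F) - α)) = χ (((u : F) - α)⁻¹) := by
        have := MulChar.star_apply' χ ((u : F) - α)
        rw [RCLike.star_def] at this
        rw [this, MulChar.inv_apply']
      rw [h1, ← map_mul]
    calc (∑ t : ↥K, ∑ u : ↥K, χ ((t : F) - α) * (starRingEnd ℂ) (χ ((u : F) - α)))
        = ∑ t : ↥K, ∑ u : ↥K, χ (e (t, u)) := by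
          refine Finset.sum_congr rfl fun t _ => Finset.sum_congr rfl fun u _ => hterm t u
      _ = ∑ p ∈ (Finset.univ : Finset ↥K) ×ˢ (Finset.univ : Finset ↥K), χ (e p) := by
          rw [Finset.sum_product]
      _ = ∑ p ∈ (Finset.univ : Finset ↥K).diag ∪ (Finset.univ : Finset ↥K).offDiag, χ (e p) := by
          rw [Finset.diag_union_offDiag]
      _ = (∑ p ∈ (Finset.univ : Finset ↥K).diag, χ (e p))
            + ∑ p ∈ (Finset.univ : Finset ↥K).offDiag, χ (e p) :=
          Finset.sum_union (Finset.disjoint_diag_offDiag _)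
      _ = (q : ℂ) := by rw [hdiag, hoff, hsumT, add_zero]
  -- conclude
  have hnormSq : Complex.normSq A = (q : ℝ) := by
    have := hmain
    rw [Complex.mul_conj] at this
    exact_mod_cast this
  rw [Complex.norm_def, hnormSq]
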